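/- Let κ be an infinite cardinal, let Y be a κ-bounded Hausdorff topological space, and let X be a subspace of Y whose density is at most κ. Then X is Tychonoff (i.e., T1 and completely regular). -/
import Mathlib

universe u

open Cardinal Set Topology

/-- A topological space is `κ`-bounded if the closure of every subset of cardinality at most `κ`
is compact. -/
def KappaBounded (κ : Cardinal.{u}) (X : Type u) [TopologicalSpace X] : Prop :=
  ∀ S : Set X, #S ≤ κ → IsCompact (closure S)

lemma completelyRegular_of_embedding {A B : Type*} [TopologicalSpace A] [TopologicalSpace B]
    [CompletelyRegularSpace B] {e : A → B} (he : IsEmbedding e) : CompletelyRegularSpace A := by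
  constructor
  intro x K hK hx
  rw [he.isClosed_iff] at hK
  obtain ⟨F, hF, rfl⟩ := hK
  obtain ⟨f, hf, hfx, hfK⟩ := CompletelyRegularSpace.completely_regular (e x) F hF hx
  exact ⟨f ∘ e, hf.comp he.continuous, hfx, fun a ha => hfK ha⟩

/-- Every subspace of density at most `κ` of a `κ`-bounded Hausdorff space is Tychonoff
(i.e. `T₁` and completely regular). -/
theorem tychonoff_subspace_of_kappaBounded_t2 {Y : Type u} [TopologicalSpace Y] [T2Space Y]
    (κ : Cardinal.{u}) (hκ : ℵ₀ ≤ κ) (hb : KappaBounded κ Y) (X : Set Y)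
    (hd : ∃ D : Set Y, D ⊆ X ∧ #D ≤ κ ∧ X ⊆ closure D) :
    T1Space X ∧ CompletelyRegularSpace X := by
  obtain ⟨D, hDX, hDκ, hXD⟩ := hd
  have hK : IsCompact (closure D) := hb D hDκ
  have : CompactSpace (closure D) := isCompact_iff_compactSpace.mp hK
  have : CompletelyRegularSpace (closure D) := inferInstance
  have he : IsEmbedding (Set.inclusion hXD) := IsEmbedding.inclusion hXD
  exact ⟨inferInstance, completelyRegular_of_embedding he⟩
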